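/- arXiv:2302.00533 — 5 statements merged into one kernel-verified Lean document; each statement's English description precedes it below -/
import Mathlib

section
/- Let $\gamma, \lambda \in [0,1)$ and let $\delta, z : \mathbb{N} \to \mathbb{R}$ be bounded sequences. For $t \in \mathbb{N}$ and $n \ge 1$ define $A_t^{(n)} = \delta_t + \sum_{l=1}^{n-1} \gamma^l (\delta_{t+l} - z_{t+l})$. Then the series below converge and $(1 - \lambda) \sum_{n=1}^{\infty} \lambda^{n-1} A_t^{(n)} = \delta_t + \sum_{l=1}^{\infty} (\gamma \lambda)^l (\delta_{t+l} - z_{t+l})$. -/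
/-- The unified advantage estimator as an exponentially-weighted average of n-step estimators:
for `γ, λ ∈ [0,1)` and bounded sequences `δ, z`, with
`A_t^{(n)} = δ_t + ∑_{l=1}^{n-1} γ^l (δ_{t+l} - z_{t+l})`, the series converge and
`(1 - λ) ∑_{n=1}^∞ λ^{n-1} A_t^{(n)} = δ_t + ∑_{l=1}^∞ (γλ)^l (δ_{t+l} - z_{t+l})`. -/
theorem stmt_5 (γ lam : ℝ) (hγ : γ ∈ Set.Ico (0 : ℝ) 1) (hlam : lam ∈ Set.Ico (0 : ℝ) 1)
    (δ z : ℕ → ℝ) (hδ : ∃ C, ∀ n, |δ n| ≤ C) (hz : ∃ C, ∀ n, |z n| ≤ C) (t : ℕ)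
    (A : ℕ → ℝ)
    (hA : ∀ n, A n = δ t + ∑ l ∈ Finset.Ico 1 n, γ ^ l * (δ (t + l) - z (t + l))) :
    Summable (fun n : ℕ => lam ^ n * A (n + 1)) ∧
      Summable (fun l : ℕ => (γ * lam) ^ (l + 1) * (δ (t + (l + 1)) - z (t + (l + 1)))) ∧
      (1 - lam) * ∑' n : ℕ, lam ^ n * A (n + 1)
        = δ t + ∑' l : ℕ, (γ * lam) ^ (l + 1) * (δ (t + (l + 1)) - z (t + (l + 1))) := by
  obtain ⟨hγ0, hγ1⟩ := hγ
  obtain ⟨hl0, hl1⟩ := hlam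
  obtain ⟨C1, hC1⟩ := hδ
  obtain ⟨C2, hC2⟩ := hz
  set g : ℕ → ℝ := fun l => δ (t + l) - z (t + l) with hg
  set D : ℝ := C1 + C2 with hDdef
  have hgb : ∀ l, |g l| ≤ D := fun l =>
    (abs_sub _ _).trans (add_le_add (hC1 _) (hC2 _))
  have hD0 : 0 ≤ D := le_trans (abs_nonneg _) (hgb 0)
  set B : ℕ → ℝ := fun n => ∑ l ∈ Finset.Ico 1 (n + 1), γ ^ l * g l with hB
  have hgeo : Summable fun l : ℕ => γ ^ l := summable_geometric_of_lt_one hγ0 hγ1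
  have hsl : Summable fun n : ℕ => lam ^ n := summable_geometric_of_lt_one hl0 hl1
  set K : ℝ := (1 - γ)⁻¹ * D with hKdef
  have hK0 : 0 ≤ K := mul_nonneg (inv_nonneg.2 (by linarith)) hD0
  have hBb : ∀ n, |B n| ≤ K := by
    intro n
    calc |B n| ≤ ∑ l ∈ Finset.Ico 1 (n + 1), |γ ^ l * g l| :=
          Finset.abs_sum_le_sum_abs _ _
      _ ≤ ∑ l ∈ Finset.Ico 1 (n + 1), γ ^ l * D := by
          refine Finset.sum_le_sum fun l _ => ?_
          rw [abs_mul, abs_pow, abs_of_nonneg hγ0]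
          exact mul_le_mul_of_nonneg_left (hgb l) (pow_nonneg hγ0 l)
      _ = (∑ l ∈ Finset.Ico 1 (n + 1), γ ^ l) * D := by rw [Finset.sum_mul]
      _ ≤ (1 - γ)⁻¹ * D := by
          refine mul_le_mul_of_nonneg_right ?_ hD0
          have := Summable.sum_le_tsum (Finset.Ico 1 (n + 1)) (fun i _ => pow_nonneg hγ0 i) hgeo
          rwa [tsum_geometric_of_lt_one hγ0 hγ1] at this
  -- comparison criterion
  have key : ∀ (f : ℕ → ℝ) (M : ℝ), (∀ n, |f n| ≤ M * lam ^ n) → Summable f := by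
    intro f M hf
    exact Summable.of_abs
      (Summable.of_nonneg_of_le (fun n => abs_nonneg _) hf (hsl.mul_left M))
  have hA' : ∀ n, A (n + 1) = δ t + B n := fun n => hA (n + 1)
  -- first summability
  have S1 : Summable fun n : ℕ => lam ^ n * A (n + 1) := by
    refine key _ (|δ t| + K) fun n => ?_
    rw [hA' n, abs_mul, abs_pow, abs_of_nonneg hl0, mul_comm]
    refine mul_le_mul_of_nonneg_right ?_ (pow_nonneg hl0 n)
    exact (abs_add_le _ _).trans (add_le_add le_rfl (hBb n))
  -- second summability
  have hpow : ∀ l : ℕ, (γ * lam) ^ (l + 1) ≤ lam ^ l := by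
    intro l
    have h1 : (γ * lam) ^ (l + 1) ≤ lam ^ (l + 1) := by
      refine pow_le_pow_left₀ (mul_nonneg hγ0 hl0) ?_ _
      nlinarith
    have h2 : lam ^ (l + 1) ≤ lam ^ l := by
      rw [pow_succ]
      nlinarith [pow_nonneg hl0 l]
    linarith
  have S2 : Summable fun l : ℕ => (γ * lam) ^ (l + 1) * g (l + 1) := by
    refine key _ D fun l => ?_
    rw [abs_mul, abs_pow, abs_of_nonneg (mul_nonneg hγ0 hl0)]
    calc (γ * lam) ^ (l + 1) * |g (l + 1)| ≤ lam ^ l * D := by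
          refine mul_le_mul (hpow l) (hgb _) (abs_nonneg _) (pow_nonneg hl0 l)
      _ = D * lam ^ l := mul_comm _ _
  refine ⟨S1, S2, ?_⟩
  -- main computation
  have ST : Summable fun n : ℕ => lam ^ n * B n := by
    refine key _ K fun n => ?_
    rw [abs_mul, abs_pow, abs_of_nonneg hl0, mul_comm]
    exact mul_le_mul_of_nonneg_right (hBb n) (pow_nonneg hl0 n)
  have hshift : ∀ n : ℕ, lam ^ (n + 1) ≤ lam ^ n := by
    intro n; rw [pow_succ]; nlinarith [pow_nonneg hl0 n]
  have ST' : Summable fun n : ℕ => lam ^ (n + 1) * B (n + 1) := by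
    refine key _ K fun n => ?_
    rw [abs_mul, abs_pow, abs_of_nonneg hl0]
    calc lam ^ (n + 1) * |B (n + 1)| ≤ lam ^ n * K :=
          mul_le_mul (hshift n) (hBb _) (abs_nonneg _) (pow_nonneg hl0 n)
      _ = K * lam ^ n := mul_comm _ _
  have ST'' : Summable fun n : ℕ => lam ^ (n + 1) * B n := by
    refine key _ K fun n => ?_
    rw [abs_mul, abs_pow, abs_of_nonneg hl0]
    calc lam ^ (n + 1) * |B n| ≤ lam ^ n * K :=
          mul_le_mul (hshift n) (hBb _) (abs_nonneg _) (pow_nonneg hl0 n)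
      _ = K * lam ^ n := mul_comm _ _
  have hB0 : B 0 = 0 := by simp [hB]
  have hT : (∑' n : ℕ, lam ^ n * B n) = ∑' n : ℕ, lam ^ (n + 1) * B (n + 1) := by
    rw [Summable.tsum_eq_zero_add ST, hB0]
    simp
  have hBd : ∀ n : ℕ, B (n + 1) - B n = γ ^ (n + 1) * g (n + 1) := by
    intro n
    simp only [hB]
    rw [Finset.sum_Ico_succ_top (Nat.le_add_left 1 n)]
    ring
  -- split the first tsum
  have hsplit : (∑' n : ℕ, lam ^ n * A (n + 1))
      = δ t * (1 - lam)⁻¹ + ∑' n : ℕ, lam ^ n * B n := by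
    have h1 : Summable fun n : ℕ => lam ^ n * δ t := hsl.mul_right (δ t)
    calc (∑' n : ℕ, lam ^ n * A (n + 1))
        = ∑' n : ℕ, (lam ^ n * δ t + lam ^ n * B n) := by
          refine tsum_congr fun n => ?_
          rw [hA' n]; ring
      _ = (∑' n : ℕ, lam ^ n * δ t) + ∑' n : ℕ, lam ^ n * B n := Summable.tsum_add h1 ST
      _ = δ t * (1 - lam)⁻¹ + ∑' n : ℕ, lam ^ n * B n := by
          rw [tsum_mul_right, tsum_geometric_of_lt_one hl0 hl1, mul_comm]
  have habel : (1 - lam) * ∑' n : ℕ, lam ^ n * B n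
      = ∑' l : ℕ, (γ * lam) ^ (l + 1) * g (l + 1) := by
    have hlt : lam * ∑' n : ℕ, lam ^ n * B n = ∑' n : ℕ, lam ^ (n + 1) * B n := by
      rw [← tsum_mul_left]
      refine tsum_congr fun n => ?_
      ring
    calc (1 - lam) * ∑' n : ℕ, lam ^ n * B n
        = (∑' n : ℕ, lam ^ n * B n) - lam * ∑' n : ℕ, lam ^ n * B n := by ring
      _ = (∑' n : ℕ, lam ^ (n + 1) * B (n + 1)) - ∑' n : ℕ, lam ^ (n + 1) * B n := by
          rw [hlt, hT]
      _ = ∑' n : ℕ, (lam ^ (n + 1) * B (n + 1) - lam ^ (n + 1) * B n) :=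
          (Summable.tsum_sub ST' ST'').symm
      _ = ∑' l : ℕ, (γ * lam) ^ (l + 1) * g (l + 1) := by
          refine tsum_congr fun n => ?_
          rw [← mul_sub, hBd n, mul_pow]
          ring
  have hne : (1 - lam) ≠ 0 := by linarith
  rw [hsplit, mul_add, ← mul_assoc, mul_comm (1 - lam) (δ t), mul_assoc,
    mul_inv_cancel₀ hne, mul_one, habel]
end

section
/- Let $\gamma, \lambda \in [0,1)$ and let $r, Q, b : \mathbb{N} \to \mathbb{R}$ be bounded sequences. Define $\delta_j^{Q} = r_j + \gamma Q_{j+1} - Q_j$, $\delta_j = r_j + \gamma Q_{j+1} - b_j$, $z_j = Q_j - b_j$, and the $\lambda$-return $G_t^{\lambda, Q} = Q_t + \sum_{n=0}^{\infty} (\gamma\lambda)^n \delta_{t+n}^{Q}$. Then for every $t$: $G_t^{\lambda, Q} - b_t = \delta_t + \sum_{l=1}^{\infty} (\gamma \lambda)^l (\delta_{t+l} - z_{t+l})$; i.e., the unified advantage estimator is a variance-reduced $\lambda$-return with arbitrary baseline $b$. -/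
/-- UAE as a variance-reduced λ-return: for `γ, λ ∈ [0,1)` and bounded sequences `r, Q, b`,
with `δ_j^Q = r_j + γ Q_{j+1} - Q_j`, `δ_j = r_j + γ Q_{j+1} - b_j`, `z_j = Q_j - b_j` and
`G_t^{λ,Q} = Q_t + ∑_{n=0}^∞ (γλ)^n δ_{t+n}^Q`, one has
`G_t^{λ,Q} - b_t = δ_t + ∑_{l=1}^∞ (γλ)^l (δ_{t+l} - z_{t+l})`. -/
theorem stmt_7 (γ lam : ℝ) (hγ : γ ∈ Set.Ico (0 : ℝ) 1) (hlam : lam ∈ Set.Ico (0 : ℝ) 1)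
    (r Q b : ℕ → ℝ) (hr : ∃ C, ∀ n, |r n| ≤ C) (hQ : ∃ C, ∀ n, |Q n| ≤ C)
    (hb : ∃ C, ∀ n, |b n| ≤ C) (t : ℕ) :
    (Q t + ∑' n : ℕ, (γ * lam) ^ n * (r (t + n) + γ * Q (t + n + 1) - Q (t + n))) - b t
      = (r t + γ * Q (t + 1) - b t) +
          ∑' l : ℕ, (γ * lam) ^ (l + 1) *
            ((r (t + (l + 1)) + γ * Q (t + (l + 1) + 1) - b (t + (l + 1)))
              - (Q (t + (l + 1)) - b (t + (l + 1)))) := by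
  obtain ⟨Cr, hCr⟩ := hr
  obtain ⟨CQ, hCQ⟩ := hQ
  set f : ℕ → ℝ := fun n => (γ * lam) ^ n * (r (t + n) + γ * Q (t + n + 1) - Q (t + n))
    with hf
  have hq : |γ * lam| < 1 := by
    rw [abs_mul, abs_of_nonneg hγ.1, abs_of_nonneg hlam.1]
    calc γ * lam ≤ 1 * lam := by gcongr; exacts [hlam.1, hγ.2.le]
      _ = lam := one_mul _
      _ < 1 := hlam.2
  have hsum : Summable f := by
    apply Summable.of_norm_bounded
      ((summable_geometric_of_lt_one (abs_nonneg _) hq).mul_left (Cr + CQ + CQ))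
    intro n
    have h1 : ‖f n‖ = |γ * lam| ^ n * |r (t + n) + γ * Q (t + n + 1) - Q (t + n)| := by
      simp [hf, abs_mul, abs_pow]
    rw [h1, mul_comm]
    gcongr
    calc |r (t + n) + γ * Q (t + n + 1) - Q (t + n)|
        ≤ |r (t + n) + γ * Q (t + n + 1)| + |Q (t + n)| := abs_sub _ _
      _ ≤ (|r (t + n)| + |γ * Q (t + n + 1)|) + |Q (t + n)| := by gcongr; exact abs_add_le _ _
      _ ≤ (Cr + CQ) + CQ := by
          gcongr
          · exact hCr _
          · rw [abs_mul, abs_of_nonneg hγ.1]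
            calc γ * |Q (t + n + 1)| ≤ 1 * CQ :=
                  mul_le_mul hγ.2.le (hCQ _) (abs_nonneg _) zero_le_one
              _ = CQ := one_mul _
          · exact hCQ _
  have hsplit : ∑' n : ℕ, f n = f 0 + ∑' n : ℕ, f (n + 1) := Summable.tsum_eq_zero_add hsum
  have hcongr : ∀ l : ℕ, (γ * lam) ^ (l + 1) *
      ((r (t + (l + 1)) + γ * Q (t + (l + 1) + 1) - b (t + (l + 1)))
        - (Q (t + (l + 1)) - b (t + (l + 1)))) = f (l + 1) := by
    intro l; simp only [hf]; ring
  rw [tsum_congr hcongr, hsplit]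
  simp only [hf, pow_zero, one_mul, Nat.add_zero]
  ring
end

section
/- Let $S$ and $A$ be measurable spaces, let $\pi, \tilde{\pi}$ be Markov kernels from $S$ to $A$, let $Q : S \times A \to \mathbb{R}$ be measurable with $\sup_{s,a} |Q(s,a)| \le M$, let $r : S \times A \to \mathbb{R}$ be measurable with $\sup_{s,a} |r(s,a)| \le K$, and let $\varepsilon > 0$. Define the baselines $b^{\pi}(s) = \int (1 + r(s,a)) Q(s,a) \, \pi(s)(da)$ and $b^{\tilde{\pi}}(s) = \int (1 + r(s,a)) Q(s,a) \, \tilde{\pi}(s)(da)$. If for every $s \in S$ the total variation distance between $\tilde{\pi}(s)$ and $\pi(s)$ is less than $\frac{\sqrt{\varepsilon}}{2}$, then for every probability measure $\nu$ on $S \times A$: $\int (Q(s,a) - b^{\tilde{\pi}}(s))^2 \, d\nu \le 2 \int (Q(s,a) - b^{\pi}(s))^2 \, d\nu + 2 \bigl( (K + 1) M \bigr)^2 \varepsilon$. -/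
open MeasureTheory

/-- Total variation distance between two measures, as the supremum over measurable sets of the
difference of the measures. -/
noncomputable def tvDist {S : Type*} [MeasurableSpace S] (μ ν : Measure S) : ℝ :=
  ⨆ E : {E : Set S // MeasurableSet E}, |(μ E).toReal - (ν E).toReal|

lemma tvDist_bddAbove {S : Type*} [MeasurableSpace S] (μ ν : Measure S)
    [IsProbabilityMeasure μ] [IsProbabilityMeasure ν] :
    BddAbove (Set.range fun E : {E : Set S // MeasurableSet E} =>
      |(μ E).toReal - (ν E).toReal|) := by
  refine ⟨2, ?_⟩
  rintro x ⟨E, rfl⟩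
  have h1 : (μ (E : Set S)).toReal ≤ 1 := by
    have := prob_le_one (μ := μ) (s := (E : Set S))
    simpa using ENNReal.toReal_mono ENNReal.one_ne_top this
  have h2 : (ν (E : Set S)).toReal ≤ 1 := by
    have := prob_le_one (μ := ν) (s := (E : Set S))
    simpa using ENNReal.toReal_mono ENNReal.one_ne_top this
  have h3 : 0 ≤ (μ (E : Set S)).toReal := ENNReal.toReal_nonneg
  have h4 : 0 ≤ (ν (E : Set S)).toReal := ENNReal.toReal_nonneg
  rw [abs_le]; constructor <;> linarith

lemma le_tvDist {S : Type*} [MeasurableSpace S] (μ ν : Measure S)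
    [IsProbabilityMeasure μ] [IsProbabilityMeasure ν] {E : Set S} (hE : MeasurableSet E) :
    |(μ E).toReal - (ν E).toReal| ≤ tvDist μ ν :=
  le_ciSup (tvDist_bddAbove μ ν) (⟨E, hE⟩ : {E : Set S // MeasurableSet E})

/-- Integrals of a bounded measurable function against two probability measures differ by
at most `2 * C * tvDist μ ν`. -/
lemma integral_diff_le_tvDist {A : Type*} [MeasurableSpace A] (μ ν : Measure A)
    [IsProbabilityMeasure μ] [IsProbabilityMeasure ν] {g : A → ℝ} (hg : Measurable g)
    {C : ℝ} (hC : ∀ a, |g a| ≤ C) :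
    |∫ a, g a ∂μ - ∫ a, g a ∂ν| ≤ 2 * C * tvDist μ ν := by
  set ρ : Measure A := μ + ν with hρ
  have hμρ : μ ≪ ρ := Measure.absolutelyContinuous_of_le (Measure.le_add_right le_rfl)
  have hνρ : ν ≪ ρ := Measure.absolutelyContinuous_of_le (Measure.le_add_left le_rfl)
  set fμ : A → ℝ := fun a => (μ.rnDeriv ρ a).toReal with hfμ
  set fν : A → ℝ := fun a => (ν.rnDeriv ρ a).toReal with hfν
  have hfμ_meas : Measurable fμ := (Measure.measurable_rnDeriv μ ρ).ennreal_toReal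
  have hfν_meas : Measurable fν := (Measure.measurable_rnDeriv ν ρ).ennreal_toReal
  have hfμ_int : Integrable fμ ρ := Measure.integrable_toReal_rnDeriv
  have hfν_int : Integrable fν ρ := Measure.integrable_toReal_rnDeriv
  have hΔ_int : Integrable (fun a => fμ a - fν a) ρ := hfμ_int.sub hfν_int
  have hμeq : ∫ a, fμ a • g a ∂ρ = ∫ a, g a ∂μ := integral_rnDeriv_smul hμρ
  have hνeq : ∫ a, fν a • g a ∂ρ = ∫ a, g a ∂ν := integral_rnDeriv_smul hνρ
  have hbdd : ∃ D, ∀ x, ‖g x‖ ≤ D := ⟨C, fun x => hC x⟩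
  have hμg_int : Integrable (fun a => g a * fμ a) ρ :=
    hfμ_int.bdd_mul hg.aestronglyMeasurable (ae_of_all _ hbdd.choose_spec)
  have hνg_int : Integrable (fun a => g a * fν a) ρ :=
    hfν_int.bdd_mul hg.aestronglyMeasurable (ae_of_all _ hbdd.choose_spec)
  have hμeq' : ∫ a, g a * fμ a ∂ρ = ∫ a, g a ∂μ := by
    rw [← hμeq]; congr 1; funext a; rw [smul_eq_mul, mul_comm]
  have hνeq' : ∫ a, g a * fν a ∂ρ = ∫ a, g a ∂ν := by
    rw [← hνeq]; congr 1; funext a; rw [smul_eq_mul, mul_comm]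
  have hdiff : ∫ a, g a ∂μ - ∫ a, g a ∂ν = ∫ a, g a * (fμ a - fν a) ∂ρ := by
    rw [← hμeq', ← hνeq', ← integral_sub hμg_int hνg_int]
    congr 1; funext a; ring
  have hC0 : 0 ≤ C := by
    have hne : Nonempty A := by
      by_contra h
      rw [not_nonempty_iff] at h
      exact (IsProbabilityMeasure.ne_zero μ) μ.eq_zero_of_isEmpty
    exact le_trans (abs_nonneg _) (hC hne.some)
  -- bound by C * ∫ |Δ|
  have step1 : |∫ a, g a ∂μ - ∫ a, g a ∂ν| ≤ C * ∫ a, |fμ a - fν a| ∂ρ := by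
    rw [hdiff]
    have hint1 : Integrable (fun a => |g a| * |fμ a - fν a|) ρ := by
      have h := ((hμg_int.sub hνg_int).congr
        (Filter.Eventually.of_forall (fun a => by ring :
          ∀ a, g a * fμ a - g a * fν a = g a * (fμ a - fν a)))).abs
      simpa [abs_mul] using h
    calc |∫ a, g a * (fμ a - fν a) ∂ρ| ≤ ∫ a, |g a| * |fμ a - fν a| ∂ρ := by
          simpa [Real.norm_eq_abs] using
            norm_integral_le_integral_norm (μ := ρ) (fun a => g a * (fμ a - fν a))
      _ ≤ ∫ a, C * |fμ a - fν a| ∂ρ := by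
          refine integral_mono hint1 (hΔ_int.abs.const_mul C) (fun a => ?_)
          exact mul_le_mul_of_nonneg_right (hC a) (abs_nonneg _)
      _ = C * ∫ a, |fμ a - fν a| ∂ρ := integral_const_mul C _
  -- compute ∫ |Δ| via Hahn-like set E
  set E : Set A := {a | fν a ≤ fμ a} with hEdef
  have hE : MeasurableSet E := measurableSet_le hfν_meas hfμ_meas
  have hsetμ : ∀ s : Set A, ∫ a in s, fμ a ∂ρ = (μ s).toReal := fun s =>
    Measure.setIntegral_toReal_rnDeriv hμρ s
  have hsetν : ∀ s : Set A, ∫ a in s, fν a ∂ρ = (ν s).toReal := fun s =>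
    Measure.setIntegral_toReal_rnDeriv hνρ s
  have hsplit : ∫ a, |fμ a - fν a| ∂ρ
      = ((μ E).toReal - (ν E).toReal) + ((ν Eᶜ).toReal - (μ Eᶜ).toReal) := by
    rw [← integral_add_compl hE hΔ_int.abs]
    congr 1
    · rw [setIntegral_congr_fun hE (fun a ha => abs_of_nonneg (sub_nonneg.mpr ha)),
        integral_sub hfμ_int.integrableOn hfν_int.integrableOn, hsetμ, hsetν]
    · rw [setIntegral_congr_fun hE.compl (fun a ha => ?_),
        integral_sub hfν_int.integrableOn hfμ_int.integrableOn, hsetν, hsetμ]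
      have : ¬ fν a ≤ fμ a := ha
      rw [abs_of_neg (by linarith [lt_of_not_ge this])]
      ring
  have hbound : ∫ a, |fμ a - fν a| ∂ρ ≤ 2 * tvDist μ ν := by
    rw [hsplit]
    have h1 := le_tvDist μ ν hE
    have h2 := le_tvDist μ ν hE.compl
    have h1' : (μ E).toReal - (ν E).toReal ≤ tvDist μ ν := (le_abs_self _).trans h1
    have h2' : (ν Eᶜ).toReal - (μ Eᶜ).toReal ≤ tvDist μ ν := (neg_le_abs _).trans_eq' (by ring_nf) |>.trans h2
    linarith
  calc |∫ a, g a ∂μ - ∫ a, g a ∂ν| ≤ C * ∫ a, |fμ a - fν a| ∂ρ := step1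
    _ ≤ C * (2 * tvDist μ ν) := mul_le_mul_of_nonneg_left hbound hC0
    _ = 2 * C * tvDist μ ν := by ring

/-- Corollary 2 -/
theorem stmt_12 {S A : Type*} [MeasurableSpace S] [MeasurableSpace A]
    (π πt : ProbabilityTheory.Kernel S A)
    [ProbabilityTheory.IsMarkovKernel π] [ProbabilityTheory.IsMarkovKernel πt]
    (Q : S × A → ℝ) (hQ_meas : Measurable Q) (M : ℝ) (hQ_bdd : ∀ x, |Q x| ≤ M)
    (r : S × A → ℝ) (hr_meas : Measurable r) (K : ℝ) (hr_bdd : ∀ x, |r x| ≤ K)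
    (ε : ℝ) (hε : 0 < ε)
    (htv : ∀ s, tvDist (πt s) (π s) < Real.sqrt ε / 2)
    (ν : Measure (S × A)) [IsProbabilityMeasure ν] :
    (∫ x, (Q x - ∫ a, (1 + r (x.1, a)) * Q (x.1, a) ∂(πt x.1)) ^ 2 ∂ν)
      ≤ 2 * (∫ x, (Q x - ∫ a, (1 + r (x.1, a)) * Q (x.1, a) ∂(π x.1)) ^ 2 ∂ν)
        + 2 * ((K + 1) * M) ^ 2 * ε := by
  classical
  set C : ℝ := (K + 1) * M with hCdef
  -- S × A is nonempty
  have hne : Nonempty (S × A) := by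
    by_contra h
    rw [not_nonempty_iff] at h
    exact (IsProbabilityMeasure.ne_zero ν) ν.eq_zero_of_isEmpty
  obtain ⟨x₀⟩ := hne
  have hM0 : 0 ≤ M := le_trans (abs_nonneg _) (hQ_bdd x₀)
  have hK0 : 0 ≤ K := le_trans (abs_nonneg _) (hr_bdd x₀)
  have hC0 : 0 ≤ C := mul_nonneg (by linarith) hM0
  set f : S × A → ℝ := fun p => (1 + r p) * Q p with hfdef
  have hf_meas : Measurable f := (measurable_const.add hr_meas).mul hQ_meas
  have hf_bdd : ∀ p, |f p| ≤ C := by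
    intro p
    rw [hfdef, abs_mul]
    have h1 : |1 + r p| ≤ K + 1 := by
      have := abs_le.mp (hr_bdd p); rw [abs_le]; constructor <;> linarith [this.1, this.2]
    exact mul_le_mul h1 (hQ_bdd p) (abs_nonneg _) (by linarith)
  set b : S → ℝ := fun s => ∫ a, f (s, a) ∂(π s) with hbdef
  set bt : S → ℝ := fun s => ∫ a, f (s, a) ∂(πt s) with hbtdef
  have hb_meas : Measurable b :=
    (hf_meas.stronglyMeasurable.integral_kernel_prod_right' (κ := π)).measurable
  have hbt_meas : Measurable bt :=
    (hf_meas.stronglyMeasurable.integral_kernel_prod_right' (κ := πt)).measurable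
  have hb_bdd : ∀ s, |b s| ≤ C := by
    intro s
    have := norm_integral_le_of_norm_le_const (μ := π s)
      (f := fun a => f (s, a)) (C := C) (ae_of_all _ fun a => hf_bdd (s, a))
    simpa [Real.norm_eq_abs] using this
  have hbt_bdd : ∀ s, |bt s| ≤ C := by
    intro s
    have := norm_integral_le_of_norm_le_const (μ := πt s)
      (f := fun a => f (s, a)) (C := C) (ae_of_all _ fun a => hf_bdd (s, a))
    simpa [Real.norm_eq_abs] using this
  -- the baselines are close
  have hclose : ∀ s, (bt s - b s) ^ 2 ≤ C ^ 2 * ε := by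
    intro s
    have h1 : |bt s - b s| ≤ 2 * C * tvDist (πt s) (π s) :=
      integral_diff_le_tvDist (πt s) (π s)
        (hf_meas.comp (measurable_const.prodMk measurable_id)) (fun a => hf_bdd (s, a))
    have h2 : 2 * C * tvDist (πt s) (π s) ≤ 2 * C * (Real.sqrt ε / 2) :=
      mul_le_mul_of_nonneg_left (htv s).le (by linarith)
    have h3 : |bt s - b s| ≤ C * Real.sqrt ε := by
      calc |bt s - b s| ≤ 2 * C * (Real.sqrt ε / 2) := h1.trans h2
        _ = C * Real.sqrt ε := by ring
    have h4 : (bt s - b s) ^ 2 ≤ (C * Real.sqrt ε) ^ 2 := by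
      rw [← sq_abs]
      exact pow_le_pow_left₀ (abs_nonneg _) h3 2
    calc (bt s - b s) ^ 2 ≤ (C * Real.sqrt ε) ^ 2 := h4
      _ = C ^ 2 * (Real.sqrt ε * Real.sqrt ε) := by ring
      _ = C ^ 2 * ε := by rw [Real.mul_self_sqrt hε.le]
  -- pointwise inequality
  have hpt : ∀ x : S × A, (Q x - bt x.1) ^ 2 ≤ 2 * (Q x - b x.1) ^ 2 + 2 * C ^ 2 * ε := by
    intro x
    have h := hclose x.1
    nlinarith [sq_nonneg (Q x - b x.1 - (bt x.1 - b x.1)), sq_nonneg (Q x - b x.1 + (bt x.1 - b x.1))]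
  -- integrability
  have hint_t : Integrable (fun x : S × A => (Q x - bt x.1) ^ 2) ν := by
    refine ⟨((hQ_meas.sub (hbt_meas.comp measurable_fst)).pow_const 2).aestronglyMeasurable, ?_⟩
    refine HasFiniteIntegral.of_bounded (C := (M + C) ^ 2) (ae_of_all _ fun x => ?_)
    have h1 : |Q x - bt x.1| ≤ M + C := (abs_sub _ _).trans (add_le_add (hQ_bdd x) (hbt_bdd x.1))
    simp only [Real.norm_eq_abs, abs_pow]
    exact pow_le_pow_left₀ (abs_nonneg _) h1 2
  have hint : Integrable (fun x : S × A => (Q x - b x.1) ^ 2) ν := by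
    refine ⟨((hQ_meas.sub (hb_meas.comp measurable_fst)).pow_const 2).aestronglyMeasurable, ?_⟩
    refine HasFiniteIntegral.of_bounded (C := (M + C) ^ 2) (ae_of_all _ fun x => ?_)
    have h1 : |Q x - b x.1| ≤ M + C := (abs_sub _ _).trans (add_le_add (hQ_bdd x) (hb_bdd x.1))
    simp only [Real.norm_eq_abs, abs_pow]
    exact pow_le_pow_left₀ (abs_nonneg _) h1 2
  calc (∫ x, (Q x - bt x.1) ^ 2 ∂ν)
      ≤ ∫ x, (2 * (Q x - b x.1) ^ 2 + 2 * C ^ 2 * ε) ∂ν :=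
        integral_mono hint_t ((hint.const_mul 2).add (integrable_const _)) hpt
    _ = 2 * (∫ x, (Q x - b x.1) ^ 2 ∂ν) + 2 * C ^ 2 * ε := by
        rw [integral_add (hint.const_mul 2) (integrable_const _), integral_const_mul,
          integral_const]
        simp
    _ = 2 * (∫ x, (Q x - b x.1) ^ 2 ∂ν) + 2 * ((K + 1) * M) ^ 2 * ε := by rw [hCdef]
end

section
/- Let $(\mathcal{A}, \mu)$ be a measure space with $\mu$ $\sigma$-finite, let $p, \tilde{p} : \mathcal{A} \to [0,\infty)$ be probability densities with respect to $\mu$, let $Q, Q_w : \mathcal{A} \to \mathbb{R}$ be measurable with $\sup_a |Q(a) - Q_w(a)| \le \Delta$ and $\sup_a |Q_w(a)| \le M$, and let $r : \mathcal{A} \to \mathbb{R}$ be measurable with $\sup_a |r(a)| \le K$. Define $b^{p} = \int p\,(1 + r)\, Q_w \, d\mu$ and $b^{\tilde{p}} = \int \tilde{p}\,(1 + r)\, Q_w \, d\mu$. If the total variation distance satisfies $\frac{1}{2}\int |\tilde{p} - p| \, d\mu \le \delta$, then $\bigl| \int \tilde{p}\,(Q - b^{p}) \, d\mu - \int \tilde{p}\,(Q_w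 - b^{\tilde{p}}) \, d\mu \bigr| \le \Delta + 2 (1 + K) M \delta$. -/
open MeasureTheory

/-- First inner inequality in the bounded-bias theorem: for probability densities `p, p̃` with
total variation distance at most `δ`, critic error `|Q - Q_w| ≤ Δ`, `|Q_w| ≤ M`, residual
`|r| ≤ K`, and residual baselines `bᵖ = ∫ p (1+r) Q_w`, `bᵖ̃ = ∫ p̃ (1+r) Q_w`,
`|∫ p̃ (Q - bᵖ) - ∫ p̃ (Q_w - bᵖ̃)| ≤ Δ + 2(1+K)Mδ`. -/
theorem stmt_16 {α : Type*} [MeasurableSpace α] (μ : Measure α) [SigmaFinite μ]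
    (p ptilde : α → ℝ) (hp_meas : Measurable p) (hpt_meas : Measurable ptilde)
    (hp_nonneg : ∀ a, 0 ≤ p a) (hpt_nonneg : ∀ a, 0 ≤ ptilde a)
    (hp_prob : (∫ a, p a ∂μ) = 1) (hpt_prob : (∫ a, ptilde a ∂μ) = 1)
    (Q Qw : α → ℝ) (hQ_meas : Measurable Q) (hQw_meas : Measurable Qw)
    (Δ : ℝ) (hΔ : ∀ a, |Q a - Qw a| ≤ Δ)
    (M : ℝ) (hM : ∀ a, |Qw a| ≤ M)
    (r : α → ℝ) (hr_meas : Measurable r) (K : ℝ) (hK : ∀ a, |r a| ≤ K)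
    (δ : ℝ) (htv : (1 / 2 : ℝ) * (∫ a, |ptilde a - p a| ∂μ) ≤ δ) :
    |(∫ a, ptilde a * (Q a - ∫ x, p x * (1 + r x) * Qw x ∂μ) ∂μ)
        - ∫ a, ptilde a * (Qw a - ∫ x, ptilde x * (1 + r x) * Qw x ∂μ) ∂μ|
      ≤ Δ + 2 * (1 + K) * M * δ := by
  -- integrability of the densities
  have hp_int : Integrable p μ := by
    by_contra h
    rw [integral_undef h] at hp_prob
    norm_num at hp_prob
  have hpt_int : Integrable ptilde μ := by
    by_contra h
    rw [integral_undef h] at hpt_prob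
    norm_num at hpt_prob
  -- nonemptiness
  rcases isEmpty_or_nonempty α with hα | hα
  · rw [μ.eq_zero_of_isEmpty] at hp_prob; simp at hp_prob
  obtain ⟨a₀⟩ := hα
  have hΔ0 : 0 ≤ Δ := le_trans (abs_nonneg _) (hΔ a₀)
  have hM0 : 0 ≤ M := le_trans (abs_nonneg _) (hM a₀)
  have hK0 : 0 ≤ K := le_trans (abs_nonneg _) (hK a₀)
  have hrQw_bdd : ∀ a, |(1 + r a) * Qw a| ≤ (1 + K) * M := by
    intro a
    rw [abs_mul]
    have h1 : |1 + r a| ≤ 1 + K := by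
      calc |1 + r a| ≤ |(1:ℝ)| + |r a| := abs_add_le _ _
        _ ≤ 1 + K := by simp [hK a]
    exact mul_le_mul h1 (hM a) (abs_nonneg _) (by linarith)
  have hQb : ∀ a, |Q a| ≤ Δ + M := by
    intro a
    calc |Q a| = |(Q a - Qw a) + Qw a| := by ring_nf
      _ ≤ |Q a - Qw a| + |Qw a| := abs_add_le _ _
      _ ≤ Δ + M := add_le_add (hΔ a) (hM a)
  -- integrability of products
  have hmulQ : Integrable (fun a => ptilde a * Q a) μ := by
    have := hpt_int.bdd_mul hQ_meas.aestronglyMeasurable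
      (c := Δ + M) (Filter.Eventually.of_forall fun x => by rw [Real.norm_eq_abs]; exact hQb x)
    simpa [mul_comm] using this
  have hmulQw : Integrable (fun a => ptilde a * Qw a) μ := by
    have := hpt_int.bdd_mul hQw_meas.aestronglyMeasurable
      (c := M) (Filter.Eventually.of_forall fun x => by rw [Real.norm_eq_abs]; exact hM x)
    simpa [mul_comm] using this
  have hmeas_rQw : Measurable (fun a => (1 + r a) * Qw a) :=
    ((measurable_const.add hr_meas).mul hQw_meas)
  have hp_rQw : Integrable (fun a => p a * ((1 + r a) * Qw a)) μ := by
    have := hp_int.bdd_mul hmeas_rQw.aestronglyMeasurable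
      (c := (1 + K) * M) (Filter.Eventually.of_forall fun x => by rw [Real.norm_eq_abs]; exact hrQw_bdd x)
    simpa [mul_comm] using this
  have hpt_rQw : Integrable (fun a => ptilde a * ((1 + r a) * Qw a)) μ := by
    have := hpt_int.bdd_mul hmeas_rQw.aestronglyMeasurable
      (c := (1 + K) * M) (Filter.Eventually.of_forall fun x => by rw [Real.norm_eq_abs]; exact hrQw_bdd x)
    simpa [mul_comm] using this
  set c1 : ℝ := ∫ x, p x * (1 + r x) * Qw x ∂μ with hc1
  set c2 : ℝ := ∫ x, ptilde x * (1 + r x) * Qw x ∂μ with hc2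
  have hc1' : c1 = ∫ x, p x * ((1 + r x) * Qw x) ∂μ := by
    simp only [hc1, mul_assoc]
  have hc2' : c2 = ∫ x, ptilde x * ((1 + r x) * Qw x) ∂μ := by
    simp only [hc2, mul_assoc]
  -- rewrite the two integrals
  have hA : (∫ a, ptilde a * (Q a - c1) ∂μ) = (∫ a, ptilde a * Q a ∂μ) - c1 := by
    have heq : ∀ a, ptilde a * (Q a - c1) = ptilde a * Q a - c1 * ptilde a := by
      intro a; ring
    rw [integral_congr_ae (Filter.Eventually.of_forall heq),
      integral_sub hmulQ (hpt_int.const_mul c1), integral_const_mul, hpt_prob, mul_one]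
  have hB : (∫ a, ptilde a * (Qw a - c2) ∂μ) = (∫ a, ptilde a * Qw a ∂μ) - c2 := by
    have heq : ∀ a, ptilde a * (Qw a - c2) = ptilde a * Qw a - c2 * ptilde a := by
      intro a; ring
    rw [integral_congr_ae (Filter.Eventually.of_forall heq),
      integral_sub hmulQw (hpt_int.const_mul c2), integral_const_mul, hpt_prob, mul_one]
  rw [hA, hB]
  have hdiffQ_int : Integrable (fun a => ptilde a * (Q a - Qw a)) μ :=
    (hmulQ.sub hmulQw).congr (Filter.Eventually.of_forall fun a => by
      simp only [Pi.sub_apply]; ring)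
  have key : (∫ a, ptilde a * Q a ∂μ) - c1 - ((∫ a, ptilde a * Qw a ∂μ) - c2)
      = (∫ a, ptilde a * (Q a - Qw a) ∂μ) + (c2 - c1) := by
    have heq : (∫ a, ptilde a * (Q a - Qw a) ∂μ)
        = (∫ a, ptilde a * Q a ∂μ) - ∫ a, ptilde a * Qw a ∂μ := by
      rw [← integral_sub hmulQ hmulQw]
      congr 1; funext a; ring
    rw [heq]; ring
  rw [key]
  have h1 : |∫ a, ptilde a * (Q a - Qw a) ∂μ| ≤ Δ := by
    rw [← Real.norm_eq_abs]
    calc ‖∫ a, ptilde a * (Q a - Qw a) ∂μ‖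
        ≤ ∫ a, ‖ptilde a * (Q a - Qw a)‖ ∂μ := norm_integral_le_integral_norm _
      _ ≤ ∫ a, Δ * ptilde a ∂μ := by
          refine integral_mono hdiffQ_int.norm (hpt_int.const_mul Δ) fun a => ?_
          rw [Real.norm_eq_abs, abs_mul, abs_of_nonneg (hpt_nonneg a), mul_comm]
          exact mul_le_mul_of_nonneg_right (hΔ a) (hpt_nonneg a)
      _ = Δ := by rw [integral_const_mul, hpt_prob, mul_one]
  have h2 : |c2 - c1| ≤ 2 * (1 + K) * M * δ := by
    have hsub_int : Integrable (fun a => (ptilde a - p a) * ((1 + r a) * Qw a)) μ :=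
      (hpt_rQw.sub hp_rQw).congr (Filter.Eventually.of_forall fun a => by
        simp only [Pi.sub_apply]; ring)
    have hdiff : c2 - c1 = ∫ a, (ptilde a - p a) * ((1 + r a) * Qw a) ∂μ := by
      rw [hc1', hc2', ← integral_sub hpt_rQw hp_rQw]
      congr 1; funext a; ring
    have habs_int : Integrable (fun a => |ptilde a - p a|) μ := (hpt_int.sub hp_int).abs
    have hIpos : 0 ≤ ∫ a, |ptilde a - p a| ∂μ :=
      integral_nonneg fun a => abs_nonneg _
    rw [hdiff, ← Real.norm_eq_abs]
    calc ‖∫ a, (ptilde a - p a) * ((1 + r a) * Qw a) ∂μ‖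
        ≤ ∫ a, ‖(ptilde a - p a) * ((1 + r a) * Qw a)‖ ∂μ := norm_integral_le_integral_norm _
      _ ≤ ∫ a, ((1 + K) * M) * |ptilde a - p a| ∂μ := by
          refine integral_mono hsub_int.norm (habs_int.const_mul _) fun a => ?_
          rw [Real.norm_eq_abs, abs_mul, mul_comm]
          exact mul_le_mul_of_nonneg_right (hrQw_bdd a) (abs_nonneg _)
      _ = ((1 + K) * M) * ∫ a, |ptilde a - p a| ∂μ := integral_const_mul _ _
      _ ≤ 2 * (1 + K) * M * δ := by
          nlinarith [mul_nonneg (mul_nonneg (by linarith : (0:ℝ) ≤ 1 + K) hM0)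
            (by linarith : (0:ℝ) ≤ 2 * δ - ∫ a, |ptilde a - p a| ∂μ)]
  exact (abs_add_le _ _).trans (add_le_add h1 h2)
end

section
/- Let $S$ be a measurable space, let $\kappa$ and $\eta$ be Markov kernels from $S$ to $S$ such that the total variation distance between $\kappa(s)$ and $\eta(s)$ is at most $d$ for every $s \in S$, let $\mu_0$ be a probability measure on $S$, let $\gamma \in [0,1)$, and let $f : S \to \mathbb{R}$ be bounded measurable with $\sup_s |f(s)| \le \Upsilon$. Then $\bigl| \sum_{t=0}^{\infty} \gamma^{t} \bigl( \int f \, d(\mu_0 \kappa^{t}) - \int f \, d(\mu_0 \eta^{t}) \bigr) \bigr| \le \frac{2 \gamma \Upsilon d}{(1 - \gamma)^{2}}$, where $\mu_0 \kappa^{t}$ denotes the composition of $\mu_0$ with $t$ iterates of $\kappa$. -/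
open MeasureTheory

/-- The `t`-step state distribution obtained by composing an initial distribution `μ0` with `t`
iterates of the Markov kernel `κ`. -/
noncomputable def stepDist {S : Type*} [MeasurableSpace S]
    (κ : ProbabilityTheory.Kernel S S) (μ0 : Measure S) : ℕ → Measure S
  | 0 => μ0
  | (t + 1) => (stepDist κ μ0 t).bind κ

section Aux

variable {S : Type*} [MeasurableSpace S]

lemma aux_integrable_of_bdd (μ : Measure S) [IsFiniteMeasure μ] {g : S → ℝ}
    (hg : Measurable g) {C : ℝ} (hC : ∀ s, |g s| ≤ C) : Integrable g μ :=
  (integrable_const C).mono' hg.aestronglyMeasurable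
    (Filter.Eventually.of_forall fun s => by simpa [Real.norm_eq_abs] using hC s)

lemma aux_tv_bdd (μ ν : Measure S) [IsProbabilityMeasure μ] [IsProbabilityMeasure ν] :
    BddAbove (Set.range fun E : {E : Set S // MeasurableSet E} =>
      |(μ E).toReal - (ν E).toReal|) := by
  refine ⟨2, ?_⟩
  rintro x ⟨E, rfl⟩
  have h1 : ((μ : Measure S) E).toReal ≤ 1 := by
    have := ENNReal.toReal_mono (measure_ne_top μ Set.univ)
      (measure_mono (Set.subset_univ (E : Set S)))
    simpa using this
  have h2 : ((ν : Measure S) E).toReal ≤ 1 := by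
    have := ENNReal.toReal_mono (measure_ne_top ν Set.univ)
      (measure_mono (Set.subset_univ (E : Set S)))
    simpa using this
  have h3 : (0 : ℝ) ≤ ((μ : Measure S) E).toReal := ENNReal.toReal_nonneg
  have h4 : (0 : ℝ) ≤ ((ν : Measure S) E).toReal := ENNReal.toReal_nonneg
  rw [abs_sub_le_iff]
  constructor <;> linarith

lemma aux_le_tvDist (μ ν : Measure S) [IsProbabilityMeasure μ] [IsProbabilityMeasure ν]
    {E : Set S} (hE : MeasurableSet E) :
    |(μ E).toReal - (ν E).toReal| ≤ tvDist μ ν :=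
  le_ciSup (aux_tv_bdd μ ν) ⟨E, hE⟩

lemma aux_tvDist_nonneg (μ ν : Measure S) [IsProbabilityMeasure μ] [IsProbabilityMeasure ν] :
    0 ≤ tvDist μ ν := by
  have := aux_le_tvDist μ ν MeasurableSet.empty
  simpa using this

/-- Key lemma: difference of integrals of a bounded function is controlled by `tvDist`. -/
lemma aux_abs_integral_sub_le_tv (μ ν : Measure S) [IsProbabilityMeasure μ]
    [IsProbabilityMeasure ν] {g : S → ℝ} (hg : Measurable g) {C : ℝ} (hC0 : 0 ≤ C)
    (hC : ∀ s, |g s| ≤ C) :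
    |(∫ x, g x ∂μ) - ∫ x, g x ∂ν| ≤ 2 * C * tvDist μ ν := by
  obtain ⟨P, hP, h1, h2⟩ := hahn_decomposition (μ := μ) (ν := ν)
  have hle1 : ν.restrict P ≤ μ.restrict P := by
    refine Measure.le_iff.2 fun t ht => ?_
    rw [Measure.restrict_apply ht, Measure.restrict_apply ht]
    exact h1 _ (ht.inter hP) Set.inter_subset_right
  have hle2 : μ.restrict Pᶜ ≤ ν.restrict Pᶜ := by
    refine Measure.le_iff.2 fun t ht => ?_
    rw [Measure.restrict_apply ht, Measure.restrict_apply ht]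
    exact h2 _ (ht.inter hP.compl) Set.inter_subset_right
  set ρ₁ : Measure S := μ.restrict P - ν.restrict P with hρ₁
  set ρ₂ : Measure S := ν.restrict Pᶜ - μ.restrict Pᶜ with hρ₂
  have e1 : ρ₁ + ν.restrict P = μ.restrict P := Measure.sub_add_cancel_of_le hle1
  have e2 : ρ₂ + μ.restrict Pᶜ = ν.restrict Pᶜ := Measure.sub_add_cancel_of_le hle2
  have hfin1 : IsFiniteMeasure ρ₁ :=
    isFiniteMeasure_of_le _ (hρ₁ ▸ Measure.sub_le)
  have hfin2 : IsFiniteMeasure ρ₂ :=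
    isFiniteMeasure_of_le _ (hρ₂ ▸ Measure.sub_le)
  have hint : ∀ (ρ : Measure S) [IsFiniteMeasure ρ], Integrable g ρ := fun ρ _ =>
    aux_integrable_of_bdd ρ hg hC
  have hμsplit : ∫ x, g x ∂μ =
      (∫ x, g x ∂ρ₁) + (∫ x, g x ∂(ν.restrict P)) + ∫ x, g x ∂(μ.restrict Pᶜ) := by
    conv_lhs => rw [← Measure.restrict_add_restrict_compl (μ := μ) hP, ← e1]
    rw [integral_add_measure (by exact (hint _).add_measure (hint _)) (hint _),
      integral_add_measure (hint _) (hint _)]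
  have hνsplit : ∫ x, g x ∂ν =
      (∫ x, g x ∂(ν.restrict P)) + ((∫ x, g x ∂ρ₂) + ∫ x, g x ∂(μ.restrict Pᶜ)) := by
    conv_lhs => rw [← Measure.restrict_add_restrict_compl (μ := ν) hP, ← e2]
    rw [integral_add_measure (hint _) (by exact (hint _).add_measure (hint _)),
      integral_add_measure (hint _) (hint _)]
  have hb1 : |∫ x, g x ∂ρ₁| ≤ C * (ρ₁ Set.univ).toReal := by
    have := norm_integral_le_of_norm_le_const (μ := ρ₁) (f := g) (C := C)
      (Filter.Eventually.of_forall fun s => by simpa [Real.norm_eq_abs] using hC s)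
    simpa [Real.norm_eq_abs, Measure.real] using this
  have hb2 : |∫ x, g x ∂ρ₂| ≤ C * (ρ₂ Set.univ).toReal := by
    have := norm_integral_le_of_norm_le_const (μ := ρ₂) (f := g) (C := C)
      (Filter.Eventually.of_forall fun s => by simpa [Real.norm_eq_abs] using hC s)
    simpa [Real.norm_eq_abs, Measure.real] using this
  have hρ₁u : (ρ₁ Set.univ).toReal = (μ P).toReal - (ν P).toReal := by
    rw [hρ₁, Measure.sub_apply MeasurableSet.univ hle1,
      Measure.restrict_apply MeasurableSet.univ, Measure.restrict_apply MeasurableSet.univ,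
      Set.univ_inter]
    exact ENNReal.toReal_sub_of_le (h1 P hP subset_rfl) (measure_ne_top μ P)
  have hρ₂u : (ρ₂ Set.univ).toReal = (ν Pᶜ).toReal - (μ Pᶜ).toReal := by
    rw [hρ₂, Measure.sub_apply MeasurableSet.univ hle2,
      Measure.restrict_apply MeasurableSet.univ, Measure.restrict_apply MeasurableSet.univ,
      Set.univ_inter]
    exact ENNReal.toReal_sub_of_le (h2 Pᶜ hP.compl subset_rfl) (measure_ne_top ν Pᶜ)
  have htv1 : (ρ₁ Set.univ).toReal ≤ tvDist μ ν := by
    rw [hρ₁u]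
    exact (le_abs_self _).trans (aux_le_tvDist μ ν hP)
  have htv2 : (ρ₂ Set.univ).toReal ≤ tvDist μ ν := by
    rw [hρ₂u]
    calc (ν Pᶜ).toReal - (μ Pᶜ).toReal ≤ |(μ Pᶜ).toReal - (ν Pᶜ).toReal| := by
          rw [abs_sub_comm]; exact le_abs_self _
      _ ≤ tvDist μ ν := aux_le_tvDist μ ν hP.compl
  have hΔ : (∫ x, g x ∂μ) - ∫ x, g x ∂ν = (∫ x, g x ∂ρ₁) - ∫ x, g x ∂ρ₂ := by
    rw [hμsplit, hνsplit]; ring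
  rw [hΔ]
  calc |(∫ x, g x ∂ρ₁) - ∫ x, g x ∂ρ₂| ≤ |∫ x, g x ∂ρ₁| + |∫ x, g x ∂ρ₂| := abs_sub _ _
    _ ≤ C * tvDist μ ν + C * tvDist μ ν :=
        add_le_add (hb1.trans (mul_le_mul_of_nonneg_left htv1 hC0))
          (hb2.trans (mul_le_mul_of_nonneg_left htv2 hC0))
    _ = 2 * C * tvDist μ ν := by ring

lemma aux_isProb_bind (μ : Measure S) [IsProbabilityMeasure μ]
    (κ : ProbabilityTheory.Kernel S S) [ProbabilityTheory.IsMarkovKernel κ] :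
    IsProbabilityMeasure (μ.bind κ) := by
  constructor
  rw [Measure.bind_apply MeasurableSet.univ κ.measurable.aemeasurable]
  simp

lemma aux_isProb_step (κ : ProbabilityTheory.Kernel S S) [ProbabilityTheory.IsMarkovKernel κ]
    (μ0 : Measure S) [IsProbabilityMeasure μ0] :
    ∀ t, IsProbabilityMeasure (stepDist κ μ0 t) := by
  intro t
  induction t with
  | zero => exact ‹IsProbabilityMeasure μ0›
  | succ t ih =>
    rw [stepDist]
    exact @aux_isProb_bind _ _ _ ih κ _

lemma aux_Kg_meas (κ : ProbabilityTheory.Kernel S S) [ProbabilityTheory.IsMarkovKernel κ]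
    {g : S → ℝ} (hg : Measurable g) :
    Measurable (fun s => ∫ x, g x ∂(κ s)) := by
  have h : StronglyMeasurable (fun p : S × S => g p.2) :=
    (hg.comp measurable_snd).stronglyMeasurable
  exact h.integral_kernel_prod_right'.measurable

lemma aux_Kg_bdd (κ : ProbabilityTheory.Kernel S S) [ProbabilityTheory.IsMarkovKernel κ]
    {g : S → ℝ} {C : ℝ} (hC : ∀ s, |g s| ≤ C) (s : S) : |∫ x, g x ∂(κ s)| ≤ C := by
  have := norm_integral_le_of_norm_le_const (μ := κ s) (f := g) (C := C)
    (Filter.Eventually.of_forall fun x => by simpa [Real.norm_eq_abs] using hC x)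
  simpa [Real.norm_eq_abs, measure_univ] using this

lemma aux_integral_bind (μ : Measure S) [IsProbabilityMeasure μ]
    (κ : ProbabilityTheory.Kernel S S) [ProbabilityTheory.IsMarkovKernel κ]
    {g : S → ℝ} (hg : Measurable g) {C : ℝ} (hC0 : 0 ≤ C) (hC : ∀ s, |g s| ≤ C) :
    ∫ x, g x ∂(μ.bind κ) = ∫ s, (∫ x, g x ∂(κ s)) ∂μ := by
  haveI := aux_isProb_bind μ κ
  set A : S → ENNReal := fun s => ∫⁻ x, ENNReal.ofReal (g x) ∂(κ s) with hA
  set B : S → ENNReal := fun s => ∫⁻ x, ENNReal.ofReal (-g x) ∂(κ s) with hB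
  have hgm : Measurable fun x => ENNReal.ofReal (g x) := ENNReal.measurable_ofReal.comp hg
  have hgm' : Measurable fun x => ENNReal.ofReal (-g x) := ENNReal.measurable_ofReal.comp hg.neg
  have hAm : Measurable A := hgm.lintegral_kernel
  have hBm : Measurable B := hgm'.lintegral_kernel
  have hAb : ∀ s, A s ≤ ENNReal.ofReal C := fun s => by
    calc A s ≤ ∫⁻ _, ENNReal.ofReal C ∂(κ s) :=
          lintegral_mono fun x => ENNReal.ofReal_le_ofReal ((le_abs_self _).trans (hC x))
      _ = ENNReal.ofReal C := by simp
  have hBb : ∀ s, B s ≤ ENNReal.ofReal C := fun s => by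
    calc B s ≤ ∫⁻ _, ENNReal.ofReal C ∂(κ s) :=
          lintegral_mono fun x => ENNReal.ofReal_le_ofReal
            ((le_abs_self _).trans (by rw [abs_neg]; exact hC x))
      _ = ENNReal.ofReal C := by simp
  have h1 : ∀ s, ∫ x, g x ∂(κ s) = (A s).toReal - (B s).toReal := fun s =>
    integral_eq_lintegral_pos_part_sub_lintegral_neg_part (aux_integrable_of_bdd _ hg hC)
  have hintA : Integrable (fun s => (A s).toReal) μ := by
    refine aux_integrable_of_bdd μ hAm.ennreal_toReal (C := C) fun s => ?_
    rw [abs_of_nonneg ENNReal.toReal_nonneg]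
    exact ENNReal.toReal_le_of_le_ofReal hC0 (hAb s)
  have hintB : Integrable (fun s => (B s).toReal) μ := by
    refine aux_integrable_of_bdd μ hBm.ennreal_toReal (C := C) fun s => ?_
    rw [abs_of_nonneg ENNReal.toReal_nonneg]
    exact ENNReal.toReal_le_of_le_ofReal hC0 (hBb s)
  have hRHS : ∫ s, (∫ x, g x ∂(κ s)) ∂μ = (∫⁻ s, A s ∂μ).toReal - (∫⁻ s, B s ∂μ).toReal := by
    simp only [h1]
    rw [integral_sub hintA hintB,
      integral_toReal hAm.aemeasurable
        (Filter.Eventually.of_forall fun s => lt_of_le_of_lt (hAb s) ENNReal.ofReal_lt_top),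
      integral_toReal hBm.aemeasurable
        (Filter.Eventually.of_forall fun s => lt_of_le_of_lt (hBb s) ENNReal.ofReal_lt_top)]
  rw [integral_eq_lintegral_pos_part_sub_lintegral_neg_part
      (aux_integrable_of_bdd _ hg hC),
    Measure.lintegral_bind κ.measurable.aemeasurable hgm.aemeasurable, Measure.lintegral_bind κ.measurable.aemeasurable hgm'.aemeasurable, hRHS]

lemma aux_step_diff (κ η : ProbabilityTheory.Kernel S S)
    [ProbabilityTheory.IsMarkovKernel κ] [ProbabilityTheory.IsMarkovKernel η]
    (d : ℝ) (htv : ∀ s, tvDist (κ s) (η s) ≤ d)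
    (μ0 : Measure S) [IsProbabilityMeasure μ0] {C : ℝ} (hC0 : 0 ≤ C) (hd0 : 0 ≤ d) :
    ∀ (t : ℕ) (g : S → ℝ), Measurable g → (∀ s, |g s| ≤ C) →
      |(∫ x, g x ∂(stepDist κ μ0 t)) - ∫ x, g x ∂(stepDist η μ0 t)| ≤ 2 * C * d * t := by
  intro t
  induction t with
  | zero => intro g _ _; simp [stepDist]
  | succ t ih =>
    intro g hg hC
    haveI hPκ := aux_isProb_step κ μ0 t
    haveI hPη := aux_isProb_step η μ0 t
    set Kg : S → ℝ := fun s => ∫ x, g x ∂(κ s) with hKg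
    set Hg : S → ℝ := fun s => ∫ x, g x ∂(η s) with hHg
    have hKgm : Measurable Kg := aux_Kg_meas κ hg
    have hHgm : Measurable Hg := aux_Kg_meas η hg
    have hKgb : ∀ s, |Kg s| ≤ C := aux_Kg_bdd κ hC
    have hHgb : ∀ s, |Hg s| ≤ C := aux_Kg_bdd η hC
    have e1 : ∫ x, g x ∂(stepDist κ μ0 (t + 1)) = ∫ s, Kg s ∂(stepDist κ μ0 t) := by
      rw [show stepDist κ μ0 (t + 1) = (stepDist κ μ0 t).bind κ from rfl]
      exact aux_integral_bind _ κ hg hC0 hC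
    have e2 : ∫ x, g x ∂(stepDist η μ0 (t + 1)) = ∫ s, Hg s ∂(stepDist η μ0 t) := by
      rw [show stepDist η μ0 (t + 1) = (stepDist η μ0 t).bind η from rfl]
      exact aux_integral_bind _ η hg hC0 hC
    have hpt : ∀ s, |Kg s - Hg s| ≤ 2 * C * d := fun s =>
      (aux_abs_integral_sub_le_tv (κ s) (η s) hg hC0 hC).trans
        (mul_le_mul_of_nonneg_left (htv s) (by positivity))
    have h2nd : |(∫ s, Kg s ∂(stepDist η μ0 t)) - ∫ s, Hg s ∂(stepDist η μ0 t)| ≤ 2 * C * d := by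
      rw [← integral_sub (aux_integrable_of_bdd _ hKgm hKgb) (aux_integrable_of_bdd _ hHgm hHgb)]
      have := norm_integral_le_of_norm_le_const (μ := stepDist η μ0 t)
        (f := fun s => Kg s - Hg s) (C := 2 * C * d)
        (Filter.Eventually.of_forall fun s => by simpa [Real.norm_eq_abs] using hpt s)
      simpa [Real.norm_eq_abs, measure_univ] using this
    have h1st := ih Kg hKgm hKgb
    rw [e1, e2]
    have htri : |(∫ s, Kg s ∂(stepDist κ μ0 t)) - ∫ s, Hg s ∂(stepDist η μ0 t)| ≤
        |(∫ s, Kg s ∂(stepDist κ μ0 t)) - ∫ s, Kg s ∂(stepDist η μ0 t)| +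
        |(∫ s, Kg s ∂(stepDist η μ0 t)) - ∫ s, Hg s ∂(stepDist η μ0 t)| :=
      abs_sub_le _ _ _
    have : ((t : ℝ) + 1) = ((t + 1 : ℕ) : ℝ) := by push_cast; ring
    calc |(∫ s, Kg s ∂(stepDist κ μ0 t)) - ∫ s, Hg s ∂(stepDist η μ0 t)|
        ≤ 2 * C * d * t + 2 * C * d := htri.trans (add_le_add h1st h2nd)
      _ = 2 * C * d * ((t : ℕ) + 1 : ℝ) := by ring
      _ = 2 * C * d * ((t + 1 : ℕ) : ℝ) := by rw [this]

end Aux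

/-- Discounted-visitation gap bound: if two Markov kernels `κ, η` on `S` satisfy
`D_TV(κ(s), η(s)) ≤ d` for every `s`, and `|f| ≤ Υ` is bounded measurable, then
`|∑_{t=0}^∞ γᵗ (∫ f d(μ0 κᵗ) - ∫ f d(μ0 ηᵗ))| ≤ 2 γ Υ d / (1 - γ)²`. -/
theorem stmt_18 {S : Type*} [MeasurableSpace S]
    (κ η : ProbabilityTheory.Kernel S S)
    [ProbabilityTheory.IsMarkovKernel κ] [ProbabilityTheory.IsMarkovKernel η]
    (d : ℝ) (htv : ∀ s, tvDist (κ s) (η s) ≤ d)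
    (μ0 : Measure S) [IsProbabilityMeasure μ0]
    (γ : ℝ) (hγ : γ ∈ Set.Ico (0 : ℝ) 1)
    (f : S → ℝ) (hf_meas : Measurable f) (Υ : ℝ) (hf_bdd : ∀ s, |f s| ≤ Υ) :
    |∑' t : ℕ, γ ^ t * ((∫ s, f s ∂(stepDist κ μ0 t)) - ∫ s, f s ∂(stepDist η μ0 t))|
      ≤ 2 * γ * Υ * d / (1 - γ) ^ 2 := by
  obtain ⟨hγ0, hγ1⟩ := hγ
  have hne : Nonempty S := by
    by_contra h
    rw [not_nonempty_iff] at h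
    have h1 : μ0 Set.univ = 1 := measure_univ
    rw [Set.univ_eq_empty_iff.mpr h] at h1
    simp at h1
  obtain ⟨s₀⟩ := hne
  have hΥ0 : 0 ≤ Υ := (abs_nonneg _).trans (hf_bdd s₀)
  have hd0 : 0 ≤ d := (aux_tvDist_nonneg (κ s₀) (η s₀)).trans (htv s₀)
  set Δ : ℕ → ℝ := fun t =>
    γ ^ t * ((∫ s, f s ∂(stepDist κ μ0 t)) - ∫ s, f s ∂(stepDist η μ0 t)) with hΔ
  have hB := aux_step_diff κ η d htv μ0 hΥ0 hd0
  have h1 : ∀ t, |Δ t| ≤ 2 * Υ * d * ((t : ℝ) * γ ^ t) := fun t => by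
    rw [hΔ, abs_mul, abs_pow, abs_of_nonneg hγ0]
    calc γ ^ t * |(∫ s, f s ∂(stepDist κ μ0 t)) - ∫ s, f s ∂(stepDist η μ0 t)|
        ≤ γ ^ t * (2 * Υ * d * t) :=
          mul_le_mul_of_nonneg_left (hB t f hf_meas hf_bdd) (pow_nonneg hγ0 t)
      _ = 2 * Υ * d * ((t : ℝ) * γ ^ t) := by ring
  have hγn : ‖γ‖ < 1 := by rw [Real.norm_eq_abs, abs_of_nonneg hγ0]; exact hγ1
  have hsum : Summable (fun t : ℕ => (t : ℝ) * γ ^ t) := by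
    simpa using summable_pow_mul_geometric_of_norm_lt_one 1 hγn
  have hsum2 : Summable fun t : ℕ => 2 * Υ * d * ((t : ℝ) * γ ^ t) := hsum.mul_left _
  have habs : Summable fun t => |Δ t| :=
    Summable.of_nonneg_of_le (fun t => abs_nonneg _) h1 hsum2
  have habs' : Summable fun t => ‖Δ t‖ := by simpa [Real.norm_eq_abs] using habs
  calc |∑' t, Δ t| ≤ ∑' t, |Δ t| := by
        simpa [Real.norm_eq_abs] using norm_tsum_le_tsum_norm habs'
    _ ≤ ∑' t : ℕ, 2 * Υ * d * ((t : ℝ) * γ ^ t) := Summable.tsum_le_tsum h1 habs hsum2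
    _ = 2 * Υ * d * ∑' t : ℕ, (t : ℝ) * γ ^ t := tsum_mul_left
    _ = 2 * Υ * d * (γ / (1 - γ) ^ 2) := by
        rw [tsum_coe_mul_geometric_of_norm_lt_one hγn]
    _ = 2 * γ * Υ * d / (1 - γ) ^ 2 := by ring
end
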